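/- For 0 < q < 1 and β ∈ ℝ, let s = √(q(1−q)), M̃(q) = (M(q) + I₂)/(2s) − I₂, and φ = (1 − 1/(2s)) β. Then for every vector v ∈ ℂ⁴ with zero amplitude on |11⟩ (i.e., v in span{|00⟩, |01⟩, |10⟩}), exp(−i β · blockdiag(0, M̃(q), 0)) · v = (P(φ) ⊗ P(φ)) · exp(−i (β/(2s)) · blockdiag(0, M(q), 0)) · v, where P(φ) = diag(1, e^{iφ}) is the single-qubit phase gate; that is, the scaled warm-started XY-block is implemented on the Hamming-weight-≤1 sector by rescaling the angle β ↦ β/(2s) and applying two single-qubit phase gates. -/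

import Mathlib

open Matrix Kronecker

/-- Two-qubit basis states are indexed by `Fin 2 × Fin 2`, ordered
`|00⟩, |01⟩, |10⟩, |11⟩`.  `blockdiag a B d` acts as the scalar `a` on `|00⟩`,
as the 2×2 matrix `B` on `span{|01⟩, |10⟩}`, and as the scalar `d` on `|11⟩`. -/
def blockdiag (a : ℂ) (B : Matrix (Fin 2) (Fin 2) ℂ) (d : ℂ) :
    Matrix (Fin 2 × Fin 2) (Fin 2 × Fin 2) ℂ := fun p r =>
  if p = (0, 0) ∧ r = (0, 0) then a
  else if p = (1, 1) ∧ r = (1, 1) then d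
  else if (p = (0, 1) ∨ p = (1, 0)) ∧ (r = (0, 1) ∨ r = (1, 0)) then B p.1 r.1
  else 0

/-- The single-qubit warm-start mixer `M(q)`, as a complex 2×2 matrix. -/
noncomputable def wsMixer (q : ℝ) : Matrix (Fin 2) (Fin 2) ℂ :=
  !![(1 - 2*q : ℝ), (-2 * Real.sqrt (q * (1 - q)) : ℝ);
     (-2 * Real.sqrt (q * (1 - q)) : ℝ), (2*q - 1 : ℝ)]

/-- The single-qubit phase gate `P(φ) = diag(1, e^{iφ})`. -/
noncomputable def phaseGate (φ : ℝ) : Matrix (Fin 2) (Fin 2) ℂ :=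
  !![1, 0; 0, Complex.exp (Complex.I * φ)]

lemma blockdiag_commute_diagonal (B : Matrix (Fin 2) (Fin 2) ℂ)
    (d : Fin 2 × Fin 2 → ℂ) (hd : d (0,1) = d (1,0)) :
    Commute (blockdiag 0 B 0) (Matrix.diagonal d) := by
  unfold Commute SemiconjBy
  ext ⟨i, j⟩ ⟨k, l⟩
  simp only [Matrix.mul_diagonal, Matrix.diagonal_mul]
  fin_cases i <;> fin_cases j <;> fin_cases k <;> fin_cases l <;>
    simp_all [blockdiag, Prod.ext_iff, mul_comm]

lemma diag_eq_kron_on (φ : ℝ) (w : Fin 2 × Fin 2 → ℂ) (hw : w (1,1) = 0) :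
    (Matrix.diagonal (fun p : Fin 2 × Fin 2 =>
        Complex.exp (Complex.I * φ * (if p = (0,0) ∨ p = (1,1) then 0 else 1)))).mulVec w
      = (phaseGate φ ⊗ₖ phaseGate φ).mulVec w := by
  have hw' : w 1 = 0 := hw
  funext p
  rw [Matrix.mulVec_diagonal]
  fin_cases p <;>
    simp [phaseGate, Matrix.mulVec, dotProduct, Fintype.sum_prod_type,
      Fin.sum_univ_two, Prod.ext_iff, hw, hw'] <;> ring

/-- For `0 < q < 1` and `β ∈ ℝ`, with `s = √(q(1-q))`,
`M̃(q) = (M(q) + I₂)/(2s) - I₂` and `φ = (1 - 1/(2s))β`, for every vector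
`v ∈ ℂ⁴` with zero amplitude on `|11⟩`,
`exp(-iβ·blockdiag(0, M̃(q), 0))·v
  = (P(φ) ⊗ P(φ)) · exp(-i(β/(2s))·blockdiag(0, M(q), 0))·v`:
the scaled warm-started XY-block is implemented on the Hamming-weight-≤1
sector by rescaling `β ↦ β/(2s)` and two single-qubit phase gates. -/
theorem statement16 (q : ℝ) (hq0 : 0 < q) (hq1 : q < 1) (β : ℝ)
    (s : ℝ) (hs : s = Real.sqrt (q * (1 - q)))
    (Mt : Matrix (Fin 2) (Fin 2) ℂ)
    (hMt : Mt = ((2*s : ℝ) : ℂ)⁻¹ • (wsMixer q + 1) - 1)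
    (φ : ℝ) (hφ : φ = (1 - 1/(2*s)) * β)
    (v : Fin 2 × Fin 2 → ℂ) (hv : v (1, 1) = 0) :
    (NormedSpace.exp ((-(Complex.I * β)) • blockdiag 0 Mt 0)).mulVec v
      = ((phaseGate φ ⊗ₖ phaseGate φ)
          * NormedSpace.exp ((-(Complex.I * (β/(2*s)))) • blockdiag 0 (wsMixer q) 0)).mulVec v := by
  have hs0 : 0 < s := by
    rw [hs]; exact Real.sqrt_pos.mpr (mul_pos hq0 (by linarith))
  have h2s : ((2*s : ℝ) : ℂ) ≠ 0 := by
    exact_mod_cast ne_of_gt (by positivity : (0:ℝ) < 2*s)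
  set d : Fin 2 × Fin 2 → ℂ := fun p => if p = (0,0) ∨ p = (1,1) then 0 else 1 with hd
  set A := (-(Complex.I * (β/(2*s)))) • blockdiag 0 (wsMixer q) 0 with hA
  have hsplit : (-(Complex.I * β)) • blockdiag 0 Mt 0
      = (Complex.I * φ) • Matrix.diagonal d + A := by
    subst hMt hφ
    ext ⟨i, j⟩ ⟨k, l⟩
    fin_cases i <;> fin_cases j <;> fin_cases k <;> fin_cases l <;>
      simp [blockdiag, Matrix.diagonal, Prod.ext_iff, hd, hA, Matrix.smul_apply,
        Matrix.add_apply, Matrix.sub_apply, Matrix.one_apply] <;>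
      push_cast <;> field_simp <;> ring
  have hcommDA : Commute ((Complex.I * φ) • Matrix.diagonal d) A := by
    exact (((blockdiag_commute_diagonal (wsMixer q) d (by norm_num [hd])).symm.smul_left
      _).smul_right _)
  rw [hsplit, Matrix.exp_add_of_commute _ _ hcommDA]
  have hexpD : NormedSpace.exp ((Complex.I * φ) • Matrix.diagonal d)
      = Matrix.diagonal (fun p => Complex.exp (Complex.I * φ * d p)) := by
    have h1 : NormedSpace.exp ((Complex.I * (φ:ℂ)) • d)
        = fun p => Complex.exp (Complex.I * φ * d p) := by
      funext p
      rw [Pi.exp_def]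
      simp only [Pi.smul_apply, smul_eq_mul]
      rw [Complex.exp_eq_exp_ℂ]
    rw [← Matrix.diagonal_smul, Matrix.exp_diagonal, h1]
  set w := (NormedSpace.exp A).mulVec v with hw
  set e : Fin 2 × Fin 2 → ℂ := fun p => if p = (1,1) then 1 else 0 with he
  have hcommE : Commute (NormedSpace.exp A) (Matrix.diagonal e) := by
    refine Commute.exp_left ?_
    exact (blockdiag_commute_diagonal (wsMixer q) e (by norm_num [he])).smul_left _
  have hEv : (Matrix.diagonal e).mulVec v = 0 := by
    funext p
    rw [Matrix.mulVec_diagonal]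
    by_cases hp : p = (1,1)
    · subst hp
      simp only [he, if_pos rfl, one_mul]
      exact hv
    · simp only [he]
      rw [if_neg hp, zero_mul]
      rfl
  have hw11 : w (1,1) = 0 := by
    have h0 : (Matrix.diagonal e).mulVec w = 0 := by
      rw [hw, Matrix.mulVec_mulVec, hcommE.symm.eq, ← Matrix.mulVec_mulVec, hEv,
        Matrix.mulVec_zero]
    have h1 := congrFun h0 (1,1)
    rw [Matrix.mulVec_diagonal] at h1
    simp only [he, if_pos rfl, one_mul] at h1
    exact h1
  rw [hexpD, ← Matrix.mulVec_mulVec, ← Matrix.mulVec_mulVec, ← hw, hd]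
  exact diag_eq_kron_on φ w hw11
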